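/- arXiv:2008.02146 — 2 statements merged into one kernel-verified Lean document; each statement's English description precedes it below -/
import Mathlib

section
/- Let Â be a symmetric positive semidefinite n×n real matrix, let λ > 0, and let P be the orthogonal projection onto the span of the eigenvectors of Â with eigenvalue at most λ. Then: (i) P ⪯ 2λ·(Â + λI)^{−1}; and (ii) for every β > 0, P ⪰ β·λ·(β·λ·I + Â)^{−1} − (β/(1+β))·I. -/
/-- The orthogonal projection onto the span of the eigenvectors of `A` with eigenvalue at
most `lam` (junk value `0` if `A` is not symmetric), constructed via the spectral theorem:
`P = U · diag(1_{λᵢ ≤ lam}) · Uᵀ` where `U` is the eigenvector unitary of `A`. -/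
noncomputable def specProj {n : ℕ} (A : Matrix (Fin n) (Fin n) ℝ) (lam : ℝ) :
    Matrix (Fin n) (Fin n) ℝ :=
  if hA : A.IsHermitian then
    (hA.eigenvectorUnitary : Matrix (Fin n) (Fin n) ℝ) *
      Matrix.diagonal (fun i => if hA.eigenvalues i ≤ lam then (1 : ℝ) else 0) *
      star (hA.eigenvectorUnitary : Matrix (Fin n) (Fin n) ℝ)
  else 0

/-- For a symmetric positive semidefinite matrix `Â` and `λ > 0`, the orthogonal
projection `P` onto the span of eigenvectors of `Â` with eigenvalue at most `λ` satisfies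
(i) `P ⪯ 2λ(Â + λI)⁻¹` and (ii) for every `β > 0`,
`P ⪰ βλ(βλI + Â)⁻¹ − (β/(1+β))I`. -/
theorem specProj_bounds {n : ℕ} (Ahat : Matrix (Fin n) (Fin n) ℝ)
    (hA : Ahat.PosSemidef) (lam : ℝ) (hlam : 0 < lam) :
    ((2 * lam) • (Ahat + lam • (1 : Matrix (Fin n) (Fin n) ℝ))⁻¹ -
        specProj Ahat lam).PosSemidef ∧
      ∀ β : ℝ, 0 < β →
        (specProj Ahat lam -
            ((β * lam) • ((β * lam) • (1 : Matrix (Fin n) (Fin n) ℝ) + Ahat)⁻¹ -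
              (β / (1 + β)) • (1 : Matrix (Fin n) (Fin n) ℝ))).PosSemidef := by
  have hH : Ahat.IsHermitian := hA.isHermitian
  set U : Matrix (Fin n) (Fin n) ℝ := (hH.eigenvectorUnitary : Matrix (Fin n) (Fin n) ℝ) with hUdef
  set ev : Fin n → ℝ := hH.eigenvalues with hevdef
  have hUU : U * star U = 1 := Matrix.mem_unitaryGroup_iff.mp hH.eigenvectorUnitary.2
  have hUs : star U * U = 1 := Matrix.mem_unitaryGroup_iff'.mp hH.eigenvectorUnitary.2
  set cd : (Fin n → ℝ) → Matrix (Fin n) (Fin n) ℝ :=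
    fun f => U * Matrix.diagonal f * star U with hcddef
  have hcd_ps : ∀ f : Fin n → ℝ, (∀ i, 0 ≤ f i) → (cd f).PosSemidef := by
    intro f hf
    have := (Matrix.posSemidef_diagonal_iff.mpr hf).mul_mul_conjTranspose_same U
    simpa [hcddef, Matrix.star_eq_conjTranspose] using this
  have hcd_sub : ∀ f g : Fin n → ℝ, cd f - cd g = cd (f - g) := by
    intro f g
    show _ = U * Matrix.diagonal (fun i => f i - g i) * star U
    rw [hcddef, ← Matrix.diagonal_sub, Matrix.mul_sub, Matrix.sub_mul]
  have hcd_add : ∀ f g : Fin n → ℝ, cd f + cd g = cd (f + g) := by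
    intro f g
    show _ = U * Matrix.diagonal (fun i => f i + g i) * star U
    rw [hcddef, ← Matrix.diagonal_add, Matrix.mul_add, Matrix.add_mul]
  have hcd_smul : ∀ (c : ℝ) (f : Fin n → ℝ), c • cd f = cd (c • f) := by
    intro c f
    rw [hcddef]
    dsimp only
    rw [Matrix.diagonal_smul, Matrix.mul_smul, Matrix.smul_mul]
  have hcd_one : cd (fun _ => 1) = 1 := by
    simp [hcddef, Matrix.diagonal_one, hUU]
  have hA_eq : Ahat = cd ev := by
    have := hH.spectral_theorem
    simpa [hcddef, Function.comp] using this
  have hcd_inv : ∀ f : Fin n → ℝ, (∀ i, f i ≠ 0) → (cd f)⁻¹ = cd (fun i => (f i)⁻¹) := by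
    intro f hf
    apply Matrix.inv_eq_right_inv
    have : cd f * cd (fun i => (f i)⁻¹)
        = U * (Matrix.diagonal f * (star U * U) * Matrix.diagonal (fun i => (f i)⁻¹)) * star U := by
      simp [hcddef, mul_assoc]
    rw [this, hUs, mul_one, Matrix.diagonal_mul_diagonal]
    have : (fun i => f i * (f i)⁻¹) = fun _ : Fin n => (1:ℝ) := by
      funext i; exact mul_inv_cancel₀ (hf i)
    rw [this, Matrix.diagonal_one, mul_one, hUU]
  have hev_nonneg : ∀ i, 0 ≤ ev i := fun i => hA.eigenvalues_nonneg i
  set ind : Fin n → ℝ := fun i => if ev i ≤ lam then (1:ℝ) else 0 with hinddef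
  have hP : specProj Ahat lam = cd ind := by
    rw [specProj, dif_pos hH]
  constructor
  · have hfun : (ev + lam • fun _ : Fin n => (1:ℝ)) = fun i => ev i + lam := by
      funext i
      simp only [Pi.add_apply, Pi.smul_apply, smul_eq_mul, mul_one]
    have h1 : Ahat + lam • (1 : Matrix (Fin n) (Fin n) ℝ) = cd (fun i => ev i + lam) := by
      rw [hA_eq, ← hcd_one, hcd_smul, hcd_add, hfun]
    have hne : ∀ i, ev i + lam ≠ 0 := fun i =>
      (by nlinarith [hev_nonneg i] : (0:ℝ) < ev i + lam).ne'
    rw [h1, hcd_inv _ hne, hP, hcd_smul, hcd_sub]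
    apply hcd_ps
    intro i
    simp only [Pi.sub_apply, Pi.smul_apply, smul_eq_mul, hinddef]
    have hpos : 0 < ev i + lam := by nlinarith [hev_nonneg i]
    split_ifs with h
    · have : (1:ℝ) ≤ 2 * lam / (ev i + lam) := by
        rw [le_div_iff₀ hpos]; linarith
      rw [div_eq_mul_inv] at this
      linarith
    · have h0 : 0 ≤ (ev i + lam)⁻¹ := by positivity
      have : 0 ≤ 2 * lam * (ev i + lam)⁻¹ := by positivity
      linarith
  · intro β hβ
    have hfun : (((β * lam) • fun _ : Fin n => (1:ℝ)) + ev) = fun i => β * lam + ev i := by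
      funext i
      simp only [Pi.add_apply, Pi.smul_apply, smul_eq_mul, mul_one]
    have h1 : (β * lam) • (1 : Matrix (Fin n) (Fin n) ℝ) + Ahat = cd (fun i => β * lam + ev i) := by
      rw [hA_eq, ← hcd_one, hcd_smul, hcd_add, hfun]
    have hne : ∀ i, β * lam + ev i ≠ 0 := fun i =>
      (by nlinarith [hev_nonneg i] : (0:ℝ) < β * lam + ev i).ne'
    rw [h1, hcd_inv _ hne, hP, hcd_smul, ← hcd_one, hcd_smul, hcd_sub, hcd_sub]
    apply hcd_ps
    intro i
    simp only [Pi.sub_apply, Pi.smul_apply, smul_eq_mul, hinddef, mul_one]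
    have hpos : 0 < β * lam + ev i := by nlinarith [hev_nonneg i]
    have h1β : (0:ℝ) < 1 + β := by linarith
    split_ifs with h
    · have ht : β * lam * (β * lam + ev i)⁻¹ ≤ 1 := by
        rw [mul_inv_le_iff₀ hpos] -- maybe name differs
        nlinarith [hev_nonneg i]
      have hs : 0 ≤ β / (1 + β) := by positivity
      linarith
    · push_neg at h
      have key : β * lam * (β * lam + ev i)⁻¹ ≤ β / (1 + β) := by
        rw [← div_eq_mul_inv, div_le_div_iff₀ hpos h1β]
        nlinarith
      linarith
end

section
/- Let A be a symmetric positive semidefinite n×n real matrix, let λ > 0, and let P be an orthogonal projection satisfying P ⪯ 4λ·(A + λI)^{−1}. Define A' = (I + P)·A·(I + P). Then: (i) Tr(A') ≤ 5·Tr(A); and (ii) for every p ≥ 1, ‖A'‖_p ≤ ‖A‖_p + 12·λ·(2·Tr(A)/λ)^{1/p}. -/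
/-!
Write `A = B²` with `B = √A` and put `X = (I + P) B`. Then `A' = X Xᴴ` has the spectrum of
`Xᴴ X = B (I + P)² B = A + 3 B P B`, and conjugating the hypothesis by `B` gives
`B P B ⪯ 4λ A (A + λI)⁻¹`. Hence `Xᴴ X ⪯ f(A)` with `f(μ) = μ + 12λ μ / (μ + λ)`, so
`‖A'‖_p ≤ ‖f(A)‖_p` by Weyl's monotonicity theorem. Minkowski's inequality bounds `‖f(A)‖_p` by
`‖A‖_p` plus the `ℓ^p` norm of the shifts `12λ μᵢ / (μᵢ + λ)`, which are at most `12λ` and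
sum to at most `12 Tr A`.
The trace bound is the identity `Tr A' + 3 Tr ((I - P) A (I - P)) = 4 Tr A`.
-/

/-- The `p`-th Schatten-type norm `‖A‖_p = (∑ᵢ |λᵢ|^p)^{1/p}` of a symmetric matrix,
where `λᵢ` are its eigenvalues (junk value `0` if `A` is not symmetric). -/
noncomputable def pNorm {n : ℕ} (A : Matrix (Fin n) (Fin n) ℝ) (p : ℝ) : ℝ :=
  if hA : A.IsHermitian then (∑ i, |hA.eigenvalues i| ^ p) ^ (1 / p) else 0

open Module Matrix RCLike
open scoped ComplexOrder

theorem OrthonormalBasis.repr_eq_zero_of_mem_span_image {𝕜 E ι : Type*} [RCLike 𝕜]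
    [NormedAddCommGroup E] [InnerProductSpace 𝕜 E] [Fintype ι] (b : OrthonormalBasis ι 𝕜 E)
    {s : Set ι} {x : E} (hx : x ∈ Submodule.span 𝕜 (b '' s)) {i : ι} (hi : i ∉ s) :
    b.repr x i = 0 := by
  have hsupp := b.toBasis.mem_span_image.1 (by simpa using hx)
  simpa using Finsupp.notMem_support_iff.1 fun h => hi (hsupp h)

namespace LinearMap.IsSymmetric

variable {𝕜 E : Type*} [RCLike 𝕜] [NormedAddCommGroup E] [InnerProductSpace 𝕜 E]
  [FiniteDimensional 𝕜 E] {T S : E →ₗ[𝕜] E} {n : ℕ}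

local notation "⟪" x ", " y "⟫" => inner 𝕜 x y

theorem re_inner_apply_self_eq_sum (hT : T.IsSymmetric) (hn : finrank 𝕜 E = n) (x : E) :
    re ⟪T x, x⟫ = ∑ i, hT.eigenvalues hn i * ‖(hT.eigenvectorBasis hn).repr x i‖ ^ 2 := by
  rw [← (hT.eigenvectorBasis hn).repr.inner_map_map, PiLp.inner_apply, map_sum]
  refine Finset.sum_congr rfl fun i _ => ?_
  rw [eigenvectorBasis_apply_self_apply, norm_sq_eq_def]
  simp only [inner_apply, map_mul, conj_ofReal, mul_re, ofReal_re, conj_re, ofReal_im, conj_im,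
    mul_neg, zero_mul, neg_zero, sub_zero, mul_im, add_zero, sub_neg_eq_add]
  ring

theorem mul_norm_sq_le_re_inner_apply_self (hT : T.IsSymmetric) (hn : finrank 𝕜 E = n)
    {s : Set (Fin n)} {c : ℝ} (hc : ∀ i ∈ s, c ≤ hT.eigenvalues hn i) {x : E}
    (hx : x ∈ Submodule.span 𝕜 (hT.eigenvectorBasis hn '' s)) :
    c * ‖x‖ ^ 2 ≤ re ⟪T x, x⟫ := by
  rw [re_inner_apply_self_eq_sum, ← (hT.eigenvectorBasis hn).repr.norm_map,
    EuclideanSpace.norm_sq_eq, Finset.mul_sum]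
  refine Finset.sum_le_sum fun i _ => ?_
  by_cases hi : i ∈ s
  · exact mul_le_mul_of_nonneg_right (hc i hi) (sq_nonneg _)
  · simp [OrthonormalBasis.repr_eq_zero_of_mem_span_image _ hx hi]

theorem re_inner_apply_self_le_mul_norm_sq (hT : T.IsSymmetric) (hn : finrank 𝕜 E = n)
    {s : Set (Fin n)} {c : ℝ} (hc : ∀ i ∈ s, hT.eigenvalues hn i ≤ c) {x : E}
    (hx : x ∈ Submodule.span 𝕜 (hT.eigenvectorBasis hn '' s)) :
    re ⟪T x, x⟫ ≤ c * ‖x‖ ^ 2 := by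
  rw [re_inner_apply_self_eq_sum, ← (hT.eigenvectorBasis hn).repr.norm_map,
    EuclideanSpace.norm_sq_eq, Finset.mul_sum]
  refine Finset.sum_le_sum fun i _ => ?_
  by_cases hi : i ∈ s
  · exact mul_le_mul_of_nonneg_right (hc i hi) (sq_nonneg _)
  · simp [OrthonormalBasis.repr_eq_zero_of_mem_span_image _ hx hi]

theorem finrank_span_eigenvectorBasis_image (hT : T.IsSymmetric) (hn : finrank 𝕜 E = n)
    (s : Finset (Fin n)) :
    finrank 𝕜 (Submodule.span 𝕜 (hT.eigenvectorBasis hn '' s)) = s.card := by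
  have hli : LinearIndependent 𝕜 fun i : (s : Set (Fin n)) => hT.eigenvectorBasis hn i :=
    (hT.eigenvectorBasis hn).orthonormal.linearIndependent.comp _ Subtype.val_injective
  rw [Set.image_eq_range, finrank_span_eq_card hli]
  simp

/-- Weyl's monotonicity theorem. The eigenvalues are listed in decreasing order, so the span of
the first `k + 1` eigenvectors of `T` and that of the last `n - k` eigenvectors of `S` meet. -/
theorem eigenvalues_le_eigenvalues (hT : T.IsSymmetric) (hS : S.IsSymmetric)
    (hn : finrank 𝕜 E = n) (hTS : (S - T).IsPositive) (k : Fin n) :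
    hT.eigenvalues hn k ≤ hS.eigenvalues hn k := by
  set V := Submodule.span 𝕜 (hT.eigenvectorBasis hn '' (Finset.Iic k : Finset (Fin n)))
  set W := Submodule.span 𝕜 (hS.eigenvectorBasis hn '' (Finset.Ici k : Finset (Fin n)))
  have hdim : finrank 𝕜 E < finrank 𝕜 V + finrank 𝕜 W := by
    rw [finrank_span_eigenvectorBasis_image, finrank_span_eigenvectorBasis_image, Fin.card_Iic,
      Fin.card_Ici, hn]
    omega
  have hVW : ¬Disjoint V W := fun h =>
    (Submodule.finrank_add_finrank_le_of_disjoint h).not_gt hdim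
  obtain ⟨x, hxV, hxW, hx0⟩ : ∃ x ∈ V, x ∈ W ∧ x ≠ 0 := by
    simpa [Submodule.disjoint_def] using hVW
  have hT_ge : hT.eigenvalues hn k * ‖x‖ ^ 2 ≤ re ⟪T x, x⟫ :=
    hT.mul_norm_sq_le_re_inner_apply_self hn
      (fun i hi => hT.eigenvalues_antitone hn (Finset.mem_Iic.1 hi)) hxV
  have hS_le : re ⟪S x, x⟫ ≤ hS.eigenvalues hn k * ‖x‖ ^ 2 :=
    hS.re_inner_apply_self_le_mul_norm_sq hn
      (fun i hi => hS.eigenvalues_antitone hn (Finset.mem_Ici.1 hi)) hxW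
  have hTS_x := hTS.re_inner_nonneg_left x
  rw [sub_apply, inner_sub_left, map_sub, sub_nonneg] at hTS_x
  exact le_of_mul_le_mul_right (hT_ge.trans (hTS_x.trans hS_le)) (by positivity)

end LinearMap.IsSymmetric

namespace Matrix.IsHermitian

variable {𝕜 n : Type*} [RCLike 𝕜] [Fintype n] [DecidableEq n] {A B : Matrix n n 𝕜}

theorem eigenvalues₀_le_eigenvalues₀ (hA : A.IsHermitian) (hB : B.IsHermitian)
    (hAB : (B - A).PosSemidef) (k : Fin (Fintype.card n)) :
    hA.eigenvalues₀ k ≤ hB.eigenvalues₀ k := by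
  refine LinearMap.IsSymmetric.eigenvalues_le_eigenvalues _ _ _ ?_ k
  rw [← map_sub]
  exact isPositive_toEuclideanLin_iff.2 hAB

theorem sum_comp_eigenvalues_eq_sum_comp_eigenvalues₀ (hA : A.IsHermitian) (F : ℝ → ℝ) :
    ∑ i, F (hA.eigenvalues i) = ∑ k, F (hA.eigenvalues₀ k) :=
  (Fintype.equivOfCardEq (Fintype.card_fin _)).symm.sum_comp (F ∘ hA.eigenvalues₀)

open Polynomial in
theorem sum_comp_eigenvalues_of_charpoly_eq_prod (hA : A.IsHermitian) {d : n → ℝ}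
    (h : A.charpoly = ∏ i, (X - C (d i : 𝕜))) (F : ℝ → ℝ) :
    ∑ i, F (hA.eigenvalues i) = ∑ i, F (d i) := by
  have hroots : (∏ i, (X - C (d i : 𝕜))).roots = Finset.univ.val.map fun i => (d i : 𝕜) := by
    rw [roots_prod _ _ (Finset.prod_ne_zero_iff.2 fun i _ => X_sub_C_ne_zero _)]
    simp
  rw [← h, hA.roots_charpoly_eq_eigenvalues] at hroots
  simpa [Multiset.map_map, Finset.sum_map_val] using
    congrArg (fun s => ((s.map re).map F).sum) hroots

theorem sum_comp_eigenvalues_cfc (hA : A.IsHermitian) (f F : ℝ → ℝ) :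
    ∑ i, F ((cfc_predicate f A).isHermitian.eigenvalues i) = ∑ i, F (f (hA.eigenvalues i)) :=
  sum_comp_eigenvalues_of_charpoly_eq_prod _ (hA.charpoly_cfc_eq f) F

end Matrix.IsHermitian

namespace Matrix.PosSemidef

section RCLike

variable {𝕜 n : Type*} [RCLike 𝕜] [Fintype n] [DecidableEq n] {A B : Matrix n n 𝕜}

theorem eigenvalues₀_nonneg (hA : A.PosSemidef) (k : Fin (Fintype.card n)) :
    0 ≤ hA.1.eigenvalues₀ k := by
  simpa [IsHermitian.eigenvalues] using
    hA.eigenvalues_nonneg (Fintype.equivOfCardEq (Fintype.card_fin _) k)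

theorem sum_comp_eigenvalues_le (hA : A.PosSemidef) (hB : B.IsHermitian)
    (hAB : (B - A).PosSemidef) {F : ℝ → ℝ} (hF : MonotoneOn F (Set.Ici 0)) :
    ∑ i, F (hA.1.eigenvalues i) ≤ ∑ i, F (hB.eigenvalues i) := by
  simp only [IsHermitian.sum_comp_eigenvalues_eq_sum_comp_eigenvalues₀]
  refine Finset.sum_le_sum fun k _ => ?_
  have hle := hA.1.eigenvalues₀_le_eigenvalues₀ hB hAB k
  exact hF (hA.eigenvalues₀_nonneg k) ((hA.eigenvalues₀_nonneg k).trans hle) hle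

end RCLike

variable {n : Type*} [Fintype n] [DecidableEq n] {A : Matrix n n ℝ}

theorem nonneg_of_mem_spectrum (hA : A.PosSemidef) {x : ℝ} (hx : x ∈ spectrum ℝ A) : 0 ≤ x := by
  obtain ⟨i, rfl⟩ := hA.1.spectrum_real_eq_range_eigenvalues ▸ hx
  exact hA.eigenvalues_nonneg i

theorem cfc_sqrt_mul_self (hA : A.PosSemidef) : cfc Real.sqrt A * cfc Real.sqrt A = A := by
  have := hA.1.isSelfAdjoint
  rw [← cfc_mul _ _ A]
  conv_rhs => rw [← cfc_id' ℝ A]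
  exact cfc_congr fun x hx => Real.mul_self_sqrt (hA.nonneg_of_mem_spectrum hx)

theorem inv_add_smul_one_eq_cfc (hA : A.PosSemidef) {lam : ℝ} (hlam : 0 < lam) :
    (A + lam • 1)⁻¹ = cfc (fun x => (x + lam)⁻¹) A := by
  have := hA.1.isSelfAdjoint
  have hf : ∀ x ∈ spectrum ℝ A, x + lam ≠ 0 := fun x hx =>
    (add_pos_of_nonneg_of_pos (hA.nonneg_of_mem_spectrum hx) hlam).ne'
  rw [cfc_inv _ _ hf, cfc_add_const lam _ A, cfc_id' ℝ A, Algebra.algebraMap_eq_smul_one,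
    nonsing_inv_eq_ringInverse]

theorem cfc_sqrt_mul_inv_add_smul_one_mul_cfc_sqrt (hA : A.PosSemidef) {lam : ℝ}
    (hlam : 0 < lam) :
    cfc Real.sqrt A * (A + lam • 1)⁻¹ * cfc Real.sqrt A = cfc (fun x => x / (x + lam)) A := by
  have hcont (f : ℝ → ℝ) : ContinuousOn f (spectrum ℝ A) := A.finite_real_spectrum.continuousOn f
  rw [hA.inv_add_smul_one_eq_cfc hlam, ← cfc_mul _ _ A (hcont _) (hcont _),
    ← cfc_mul _ _ A (hcont _) (hcont _)]
  refine cfc_congr fun x hx => ?_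
  rw [mul_right_comm, Real.mul_self_sqrt (hA.nonneg_of_mem_spectrum hx), div_eq_mul_inv]

end Matrix.PosSemidef

namespace Real

variable {ι : Type*} (s : Finset ι) {p : ℝ}

theorem Lp_le_mul_rpow_of_le_of_sum_le {d : ι → ℝ} {c T : ℝ} (hp : 1 ≤ p) (hc : 0 ≤ c)
    (hT : 0 ≤ T) (hd : ∀ i ∈ s, 0 ≤ d i) (hdc : ∀ i ∈ s, d i ≤ c)
    (hsum : ∑ i ∈ s, d i ≤ c * T) :
    (∑ i ∈ s, d i ^ p) ^ (1 / p) ≤ c * T ^ (1 / p) := by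
  have hp0 : p ≠ 0 := by positivity
  have hpow : ∀ i ∈ s, d i ^ p ≤ c ^ (p - 1) * d i := fun i hi => by
    calc d i ^ p = d i ^ (p - 1) * d i ^ (1 : ℝ) := by
          rw [← rpow_add' (hd i hi) (by simpa using hp0), sub_add_cancel]
      _ ≤ c ^ (p - 1) * d i := by
          rw [rpow_one]
          gcongr <;> first | exact hd i hi | exact hdc i hi
  calc (∑ i ∈ s, d i ^ p) ^ (1 / p) ≤ (c ^ p * T) ^ (1 / p) := by
        gcongr
        · exact Finset.sum_nonneg fun i hi => rpow_nonneg (hd i hi) p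
        calc ∑ i ∈ s, d i ^ p ≤ c ^ (p - 1) * ∑ i ∈ s, d i := by
              rw [Finset.mul_sum]
              exact Finset.sum_le_sum hpow
          _ ≤ c ^ (p - 1) * (c * T) := by gcongr
          _ = c ^ p * T := by
              rw [← mul_assoc, ← rpow_add_one' hc (by simpa using hp0), sub_add_cancel]
    _ = c * T ^ (1 / p) := by
        rw [mul_rpow (by positivity) hT, ← rpow_mul hc, mul_one_div_cancel hp0, rpow_one]

theorem Lp_add_mul_div_add_le {μ : ι → ℝ} (hμ : ∀ i ∈ s, 0 ≤ μ i) {c lam : ℝ} (hc : 0 ≤ c)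
    (hlam : 0 < lam) (hp : 1 ≤ p) :
    (∑ i ∈ s, |μ i + c * lam * (μ i / (μ i + lam))| ^ p) ^ (1 / p) ≤
      (∑ i ∈ s, |μ i| ^ p) ^ (1 / p) + c * lam * ((∑ i ∈ s, μ i) / lam) ^ (1 / p) := by
  have hshift : ∀ i ∈ s, 0 ≤ c * lam * (μ i / (μ i + lam)) := fun i hi => by
    have := hμ i hi
    positivity
  refine (Lp_add_le s _ _ hp).trans (add_le_add_right ?_ _)
  rw [Finset.sum_congr rfl fun i hi => by rw [abs_of_nonneg (hshift i hi)]]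
  refine Lp_le_mul_rpow_of_le_of_sum_le s hp (by positivity)
    (div_nonneg (Finset.sum_nonneg hμ) hlam.le) hshift (fun i hi => ?_) ?_
  · have := hμ i hi
    exact mul_le_of_le_one_right (by positivity) (div_le_one_of_le₀ (by linarith) (by linarith))
  · rw [← Finset.mul_sum, Finset.sum_div]
    refine mul_le_mul_of_nonneg_left (Finset.sum_le_sum fun i hi => ?_) (by positivity)
    exact div_le_div_of_nonneg_left (hμ i hi) hlam (by linarith [hμ i hi])

end Real

section Isotropize

variable {n : Type*} [Fintype n] [DecidableEq n] {A P : Matrix n n ℝ}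

theorem trace_conj_one_add_add_three_mul_trace_conj_one_sub {R : Type*} [CommRing R]
    {P : Matrix n n R} (hP : P * P = P) (A : Matrix n n R) :
    ((1 + P) * A * (1 + P)).trace + 3 * ((1 - P) * A * (1 - P)).trace = 4 * A.trace := by
  rw [trace_mul_comm ((1 + P) * A), trace_mul_comm ((1 - P) * A), ← Matrix.mul_assoc,
    ← Matrix.mul_assoc]
  have h₁ : (1 + P) * (1 + P) * A = A + P * A + P * A + P * P * A := by noncomm_ring
  have h₂ : (1 - P) * (1 - P) * A = A - P * A - P * A + P * P * A := by noncomm_ring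
  simp only [h₁, h₂, hP, trace_add, trace_sub]
  ring

theorem trace_conj_one_add_le (hA : A.PosSemidef) (hP : P.IsHermitian) (hProj : P * P = P) :
    ((1 + P) * A * (1 + P)).trace ≤ 4 * A.trace := by
  have h := (hA.conjTranspose_mul_mul_same (1 - P)).trace_nonneg
  rw [conjTranspose_sub, conjTranspose_one, hP.eq] at h
  linarith [trace_conj_one_add_add_three_mul_trace_conj_one_sub hProj A]

theorem posSemidef_cfc_sub_conjTranspose_mul_self (hA : A.PosSemidef) {lam : ℝ} (hlam : 0 < lam)
    (hP : P.IsHermitian) (hProj : P * P = P)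
    (hPle : ((4 * lam) • (A + lam • (1 : Matrix n n ℝ))⁻¹ - P).PosSemidef) :
    (cfc (fun x => x + 12 * lam * (x / (x + lam))) A -
      ((1 + P) * cfc Real.sqrt A)ᴴ * ((1 + P) * cfc Real.sqrt A)).PosSemidef := by
  set B := cfc Real.sqrt A
  have hB : B.IsHermitian := (cfc_predicate Real.sqrt A).isHermitian
  have hcfc : cfc (fun x => x + 12 * lam * (x / (x + lam))) A =
      A + (12 * lam) • cfc (fun x => x / (x + lam)) A := by
    have hcont (f : ℝ → ℝ) : ContinuousOn f (spectrum ℝ A) :=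
      A.finite_real_spectrum.continuousOn f
    rw [cfc_add _ _ _ (hcont _) (hcont _), cfc_id' ℝ A hA.1.isSelfAdjoint,
      cfc_const_mul _ _ _ (hcont _)]
  have hXX : ((1 + P) * B)ᴴ * ((1 + P) * B) = A + (3 : ℝ) • (B * P * B) := by
    rw [conjTranspose_mul, hB.eq, conjTranspose_add, conjTranspose_one, hP.eq,
      ← hA.cfc_sqrt_mul_self]
    calc B * (1 + P) * ((1 + P) * B) = B * B + 2 • (B * P * B) + B * (P * P) * B := by
          noncomm_ring
      _ = B * B + (3 : ℝ) • (B * P * B) := by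
          rw [hProj]
          module
  have hconj := hPle.conjTranspose_mul_mul_same B
  rw [hB.eq, Matrix.mul_sub, Matrix.sub_mul, Matrix.mul_smul, Matrix.smul_mul,
    hA.cfc_sqrt_mul_inv_add_smul_one_mul_cfc_sqrt hlam] at hconj
  rw [hcfc, hXX]
  convert hconj.smul (by norm_num : (0 : ℝ) ≤ 3) using 1
  module

end Isotropize

section PNorm

variable {n : ℕ} {A B : Matrix (Fin n) (Fin n) ℝ} {p : ℝ}

theorem pNorm_of_isHermitian (hA : A.IsHermitian) (p : ℝ) :
    pNorm A p = (∑ i, |hA.eigenvalues i| ^ p) ^ (1 / p) :=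
  dif_pos hA

theorem pNorm_eq_of_charpoly_eq (hA : A.IsHermitian) (hB : B.IsHermitian)
    (h : A.charpoly = B.charpoly) (p : ℝ) : pNorm A p = pNorm B p := by
  rw [pNorm_of_isHermitian hA, pNorm_of_isHermitian hB,
    (hA.eigenvalues_eq_eigenvalues_iff hB).2 h]

theorem pNorm_mul_conjTranspose_self (X : Matrix (Fin n) (Fin n) ℝ) (p : ℝ) :
    pNorm (X * Xᴴ) p = pNorm (Xᴴ * X) p :=
  pNorm_eq_of_charpoly_eq (isHermitian_mul_conjTranspose_self X)
    (isHermitian_conjTranspose_mul_self X) (charpoly_mul_comm _ _) p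

theorem pNorm_le_pNorm_of_posSemidef_sub (hA : A.PosSemidef) (hAB : (B - A).PosSemidef)
    (hp : 0 ≤ p) : pNorm A p ≤ pNorm B p := by
  have hB : B.IsHermitian := by simpa using hA.1.add hAB.1
  have hF : MonotoneOn (fun t : ℝ => |t| ^ p) (Set.Ici 0) := fun s hs t ht hst => by
    dsimp only
    rw [abs_of_nonneg hs, abs_of_nonneg ht]
    exact Real.rpow_le_rpow hs hst hp
  rw [pNorm_of_isHermitian hA.1, pNorm_of_isHermitian hB]
  exact Real.rpow_le_rpow (Finset.sum_nonneg fun i _ => by positivity)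
    (hA.sum_comp_eigenvalues_le hB hAB hF) (by positivity)

theorem pNorm_cfc (hA : A.IsHermitian) (f : ℝ → ℝ) (p : ℝ) :
    pNorm (cfc f A) p = (∑ i, |f (hA.eigenvalues i)| ^ p) ^ (1 / p) := by
  rw [pNorm_of_isHermitian (cfc_predicate f A).isHermitian,
    hA.sum_comp_eigenvalues_cfc f fun t => |t| ^ p]

end PNorm

/-- Let `A` be symmetric positive semidefinite, `λ > 0`, and `P` an orthogonal projection
with `P ⪯ 4λ(A + λI)⁻¹`.  Then `A' = (I+P)A(I+P)` satisfies (i) `Tr(A') ≤ 5·Tr(A)` and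
(ii) `‖A'‖_p ≤ ‖A‖_p + 12λ(2·Tr(A)/λ)^{1/p}` for every `p ≥ 1`. -/
theorem isotropize_step_norm_growth {n : ℕ} (A : Matrix (Fin n) (Fin n) ℝ)
    (hA : A.PosSemidef) (lam : ℝ) (hlam : 0 < lam)
    (P : Matrix (Fin n) (Fin n) ℝ) (hP : P.IsHermitian) (hProj : P * P = P)
    (hPle : ((4 * lam) • (A + lam • (1 : Matrix (Fin n) (Fin n) ℝ))⁻¹ - P).PosSemidef) :
    ((1 + P) * A * (1 + P)).trace ≤ 5 * A.trace ∧
      ∀ p : ℝ, 1 ≤ p →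
        pNorm ((1 + P) * A * (1 + P)) p ≤
          pNorm A p + 12 * lam * (2 * A.trace / lam) ^ (1 / p) := by
  refine ⟨(trace_conj_one_add_le hA hP hProj).trans (by linarith [hA.trace_nonneg]),
    fun p hp => ?_⟩
  set X := (1 + P) * cfc Real.sqrt A with hX
  have hA' : (1 + P) * A * (1 + P) = X * Xᴴ := by
    rw [hX, conjTranspose_mul, (cfc_predicate Real.sqrt A).isHermitian.eq, conjTranspose_add,
      conjTranspose_one, hP.eq]
    conv_lhs => rw [← hA.cfc_sqrt_mul_self]
    noncomm_ring
  have htrace : A.trace = ∑ i, hA.1.eigenvalues i := by simp [hA.1.trace_eq_sum_eigenvalues]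
  calc pNorm ((1 + P) * A * (1 + P)) p = pNorm (Xᴴ * X) p := by
        rw [hA', pNorm_mul_conjTranspose_self]
    _ ≤ pNorm (cfc (fun x => x + 12 * lam * (x / (x + lam))) A) p :=
        pNorm_le_pNorm_of_posSemidef_sub (posSemidef_conjTranspose_mul_self X)
          (posSemidef_cfc_sub_conjTranspose_mul_self hA hlam hP hProj hPle) (by linarith)
    _ ≤ pNorm A p + 12 * lam * (A.trace / lam) ^ (1 / p) := by
        rw [pNorm_cfc hA.1, pNorm_of_isHermitian hA.1, htrace]
        exact Real.Lp_add_mul_div_add_le _ (fun i _ => hA.eigenvalues_nonneg i) (by norm_num)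
          hlam hp
    _ ≤ pNorm A p + 12 * lam * (2 * A.trace / lam) ^ (1 / p) := by
        have := hA.trace_nonneg
        gcongr
        linarith
end
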